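/- Let κ ≠ 0, let t be a smooth positive nonconstant function of z on an open interval I, let s and u be smooth positive functions of x on an open interval J, and suppose 2·t''(z) − s(x)·((s·u)'/u)'(x)/t(z) = −κ·t(z)³/(s(x)u(x))² holds for all (x,z) ∈ J × I. Then the function x ↦ s(x)·u(x) is constant on J. -/

import Mathlib

open scoped ContDiff

/-- If `κ ≠ 0`, `t > 0` is smooth and nonconstant on an open interval `I`, `s, u > 0` are
smooth on an open interval `J`, and `2 t'' − s ((s·u)'/u)' / t = −κ t³/(s·u)²` holds on
`J × I`, then `s·u` is constant on `J`. -/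
theorem stmt7 (κ : ℝ) (hκ : κ ≠ 0) (I J : Set ℝ)
    (hIopen : IsOpen I) (hIconn : IsPreconnected I)
    (hJopen : IsOpen J) (hJconn : IsPreconnected J)
    (t s u : ℝ → ℝ)
    (ht : ContDiffOn ℝ ∞ t I) (hs : ContDiffOn ℝ ∞ s J) (hu : ContDiffOn ℝ ∞ u J)
    (htpos : ∀ z ∈ I, 0 < t z) (hspos : ∀ x ∈ J, 0 < s x) (hupos : ∀ x ∈ J, 0 < u x)
    (htnc : ∃ z₁ ∈ I, ∃ z₂ ∈ I, t z₁ ≠ t z₂)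
    (heq : ∀ x ∈ J, ∀ z ∈ I,
      2 * deriv (deriv t) z
        - s x * deriv (fun x' => deriv (fun x'' => s x'' * u x'') x' / u x') x / t z
      = -κ * (t z) ^ 3 / (s x * u x) ^ 2) :
    ∀ x₁ ∈ J, ∀ x₂ ∈ J, s x₁ * u x₁ = s x₂ * u x₂ := by
  obtain ⟨z₁, hz₁, z₂, hz₂, hne⟩ := htnc
  intro x₁ hx₁ x₂ hx₂
  have hT1 := htpos z₁ hz₁
  have hT2 := htpos z₂ hz₂
  have hB1 : 0 < s x₁ * u x₁ := mul_pos (hspos _ hx₁) (hupos _ hx₁)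
  have hB2 : 0 < s x₂ * u x₂ := mul_pos (hspos _ hx₂) (hupos _ hx₂)
  set A₁ := s x₁ * deriv (fun x' => deriv (fun x'' => s x'' * u x'') x' / u x') x₁ with hA1
  set A₂ := s x₂ * deriv (fun x' => deriv (fun x'' => s x'' * u x'') x' / u x') x₂ with hA2
  have key : ∀ z ∈ I, (A₂ - A₁) * (s x₁ * u x₁)^2 * (s x₂ * u x₂)^2
      = -κ * (t z)^4 * ((s x₂ * u x₂)^2 - (s x₁ * u x₁)^2) := by
    intro z hz
    have e1 := heq x₁ hx₁ z hz
    have e2 := heq x₂ hx₂ z hz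
    rw [← hA1] at e1
    rw [← hA2] at e2
    have hT := (htpos z hz).ne'
    have hb1 := hB1.ne'
    have hb2 := hB2.ne'
    field_simp at e1 e2
    have q1 : A₁ = 2 * deriv (deriv t) z * t z + t z ^ 4 * κ / (s x₁ ^ 2 * u x₁ ^ 2) := by linarith
    have q2 : A₂ = 2 * deriv (deriv t) z * t z + t z ^ 4 * κ / (s x₂ ^ 2 * u x₂ ^ 2) := by linarith
    rw [q1, q2]
    have := (hspos _ hx₁).ne'
    have := (hspos _ hx₂).ne'
    have := (hupos _ hx₁).ne'
    have := (hupos _ hx₂).ne'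
    field_simp
    ring
  have k1 := key z₁ hz₁
  have k2 := key z₂ hz₂
  have h4 : t z₁ ^ 4 ≠ t z₂ ^ 4 := by
    intro h
    apply hne
    rcases lt_trichotomy (t z₁) (t z₂) with hlt | h' | hgt
    · exact absurd h (ne_of_lt (pow_lt_pow_left₀ hlt hT1.le (by norm_num)))
    · exact h'
    · exact absurd h.symm (ne_of_lt (pow_lt_pow_left₀ hgt hT2.le (by norm_num)))
  have hzero : κ * (t z₁ ^ 4 - t z₂ ^ 4) * ((s x₂ * u x₂)^2 - (s x₁ * u x₁)^2) = 0 := by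
    linarith [k1, k2, (by ring : -κ * (t z₁)^4 * ((s x₂ * u x₂)^2 - (s x₁ * u x₁)^2)
      - -κ * (t z₂)^4 * ((s x₂ * u x₂)^2 - (s x₁ * u x₁)^2)
      = -(κ * (t z₁ ^ 4 - t z₂ ^ 4) * ((s x₂ * u x₂)^2 - (s x₁ * u x₁)^2)))]
  have hsq : (s x₂ * u x₂)^2 = (s x₁ * u x₁)^2 := by
    rcases mul_eq_zero.1 hzero with h | h
    · rcases mul_eq_zero.1 h with h | h
      · exact absurd h hκ
      · exact absurd (sub_eq_zero.1 h) h4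
    · linarith [sub_eq_zero.1 h]
  nlinarith [hsq, hB1, hB2]
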